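/- Let w ≥ 1 and let P and Q be lists of Booleans, each of length w, with P ≠ Q. Interpret P and Q as natural numbers p = toNat(P) and q = toNat(Q) via big-endian binary encoding. Then the length of the longest common prefix of P and Q equals w − 1 − Nat.log2 (Nat.xor p q). (Since P ≠ Q and both have length w, Nat.xor p q ≠ 0, so the base-2 logarithm is the position of the most significant differing bit.) -/

import Mathlib

/-- Length of the longest common prefix of two lists. -/
def lcpLen {α : Type*} [DecidableEq α] : List α → List α → ℕ
  | a :: x, b :: y => if a = b then lcpLen x y + 1 else 0
  | _, _ => 0

/-- Big-endian binary encoding of a list of Booleans. -/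
def boolToNat (B : List Bool) : ℕ :=
  ∑ i : Fin B.length, (if B.get i then 1 else 0) * 2 ^ (B.length - 1 - (i : ℕ))

lemma natxor_eq (a b : ℕ) : Nat.xor a b = a ^^^ b := rfl

lemma two_pow_xor_eq_add {n r : ℕ} (h : r < 2 ^ n) : 2 ^ n ^^^ r = 2 ^ n + r := by
  apply Nat.eq_of_testBit_eq
  intro i
  rcases lt_trichotomy i n with hi | rfl | hi
  · rw [Nat.testBit_two_pow_add_gt hi, Nat.testBit_xor, Nat.testBit_two_pow]
    simp [Nat.ne_of_gt hi]
  · rw [Nat.testBit_two_pow_add_eq, Nat.testBit_xor, Nat.testBit_two_pow]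
    simp
  · have h1 : r < 2 ^ i := lt_of_lt_of_le h (Nat.pow_le_pow_right (by norm_num) hi.le)
    have h2 : 2 ^ n + r < 2 ^ i := by
      calc 2 ^ n + r < 2 ^ n + 2 ^ n := by omega
      _ = 2 ^ (n + 1) := by ring
      _ ≤ 2 ^ i := Nat.pow_le_pow_right (by norm_num) hi
    rw [Nat.testBit_lt_two_pow h2, Nat.testBit_xor, Nat.testBit_two_pow,
      Nat.testBit_lt_two_pow h1]
    simp [Nat.ne_of_lt hi]

lemma xor_cancel_left' (c p q : ℕ) : (c ^^^ p) ^^^ (c ^^^ q) = p ^^^ q := by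
  rw [Nat.xor_comm c p, Nat.xor_assoc, ← Nat.xor_assoc c c q, Nat.xor_self, Nat.zero_xor]

lemma boolToNat_cons (a : Bool) (x : List Bool) :
    boolToNat (a :: x) = (if a then 1 else 0) * 2 ^ x.length + boolToNat x := by
  have h0 : boolToNat (a :: x) = ∑ i : Fin (x.length + 1),
      (if (a :: x).get i then 1 else 0) * 2 ^ (x.length + 1 - 1 - (i : ℕ)) := rfl
  rw [h0, Fin.sum_univ_succ]
  congr 1
  · unfold boolToNat
    apply Finset.sum_congr rfl
    intro i _
    simp only [Fin.val_succ, List.get_cons_succ]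
    have he : x.length + 1 - 1 - ((i : ℕ) + 1) = x.length - 1 - (i : ℕ) := by omega
    rw [he]
    rfl

lemma boolToNat_lt (x : List Bool) : boolToNat x < 2 ^ x.length := by
  induction x with
  | nil => simp [boolToNat]
  | cons a x ih =>
    rw [boolToNat_cons]
    have : (a :: x).length = x.length + 1 := rfl
    rw [this, pow_succ]
    cases a <;> simp <;> omega

lemma boolToNat_inj : ∀ (x y : List Bool), x.length = y.length →
    boolToNat x = boolToNat y → x = y
  | [], [], _, _ => rfl
  | a :: x, b :: y, hl, he => by
    have hl' : x.length = y.length := by simpa using hl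
    rw [boolToNat_cons, boolToNat_cons, hl'] at he
    have hpx := boolToNat_lt x
    have hpy := boolToNat_lt y
    rw [hl'] at hpx
    have hab : a = b := by cases a <;> cases b <;> first | rfl | (simp at he; omega)
    subst hab
    have : boolToNat x = boolToNat y := by cases a <;> simp at he <;> omega
    rw [boolToNat_inj x y hl' this]

theorem lcp_eq_of_xor_msb (w : ℕ) (hw : 1 ≤ w) (P Q : List Bool)
    (hP : P.length = w) (hQ : Q.length = w) (hne : P ≠ Q) :
    lcpLen P Q = w - 1 - Nat.log2 (Nat.xor (boolToNat P) (boolToNat Q)) := by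
  induction w generalizing P Q with
  | zero => omega
  | succ n ih =>
    match P, Q with
    | a :: x, b :: y =>
      have hx : x.length = n := by simpa using hP
      have hy : y.length = n := by simpa using hQ
      have hpx : boolToNat x < 2 ^ n := hx ▸ boolToNat_lt x
      have hpy : boolToNat y < 2 ^ n := hy ▸ boolToNat_lt y
      have hxorlt : boolToNat x ^^^ boolToNat y < 2 ^ n := Nat.xor_lt_two_pow hpx hpy
      rw [natxor_eq, boolToNat_cons, boolToNat_cons, hx, hy]
      by_cases hab : a = b
      · subst hab
        have hxy : x ≠ y := fun h => hne (by rw [h])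
        have hxor : ((if a then 1 else 0) * 2 ^ n + boolToNat x) ^^^
            ((if a then 1 else 0) * 2 ^ n + boolToNat y) = boolToNat x ^^^ boolToNat y := by
          cases a
          · simp
          · simp only [if_pos, one_mul]
            rw [← two_pow_xor_eq_add hpx, ← two_pow_xor_eq_add hpy, xor_cancel_left']
        rw [hxor]
        have hn : 1 ≤ n := by
          by_contra h
          push_neg at h
          interval_cases n
          · exact hxy (by rw [List.length_eq_zero_iff.mp hx, List.length_eq_zero_iff.mp hy])
        have hrec := ih hn x y hx hy hxy
        rw [natxor_eq] at hrec
        have hxorne : boolToNat x ^^^ boolToNat y ≠ 0 := by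
          intro h
          exact hxy (boolToNat_inj x y (by omega) (xor_eq_zero_iff.mp h))
        have hlog : Nat.log2 (boolToNat x ^^^ boolToNat y) < n := by
          rw [Nat.log2_eq_log_two]
          exact Nat.log_lt_of_lt_pow hxorne hxorlt
        have hlcp : lcpLen (a :: x) (a :: y) = lcpLen x y + 1 := by simp [lcpLen]
        rw [hlcp]
        omega
      · simp only [lcpLen, if_neg hab]
        have hxor : ((if a then 1 else 0) * 2 ^ n + boolToNat x) ^^^
            ((if b then 1 else 0) * 2 ^ n + boolToNat y)
            = 2 ^ n + (boolToNat x ^^^ boolToNat y) := by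
          rw [← two_pow_xor_eq_add hxorlt]
          cases a <;> cases b <;> simp_all
          · rw [← two_pow_xor_eq_add hpy, Nat.xor_comm (boolToNat x), Nat.xor_assoc,
              Nat.xor_comm (boolToNat y) (boolToNat x)]
          · rw [← two_pow_xor_eq_add hpx, Nat.xor_assoc]
        rw [hxor]
        have hlog : Nat.log2 (2 ^ n + (boolToNat x ^^^ boolToNat y)) = n := by
          rw [Nat.log2_eq_log_two]
          apply Nat.log_eq_of_pow_le_of_lt_pow (by omega)
          rw [pow_succ]
          omega
        omega
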